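/- Let M0(γ) = inf{ n ≥ 1 : max_{1 ≤ k ≤ n} ( −L(X_k^n) − log μ0(X_k^n) − nλ ) ≥ log γ } for γ > 1 and λ > 0. Then E_0(M0(γ)) ≥ γ (2^λ − 1), where E_0 denotes expectation when all observations X_1, X_2, … are i.i.d. with distribution μ0. -/

import Mathlib

open MeasureTheory Filter
open scoped ENNReal NNReal Topology BigOperators Classical

namespace ChangeDetect

variable {𝒳 : Type} [Fintype 𝒳] [Nonempty 𝒳] [MeasurableSpace 𝒳]

/-- A probability mass function on `𝒳`. -/
def IsPMF (p : 𝒳 → ℝ) : Prop := (∀ a, 0 ≤ p a) ∧ ∑ a, p a = 1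

/-- A probability mass function on `𝒳` with full support. -/
def IsPosPMF (p : 𝒳 → ℝ) : Prop := (∀ a, 0 < p a) ∧ ∑ a, p a = 1

/-- `L` is a family of length functions of fixed-to-variable prefix codes,
i.e. it satisfies Kraft's inequality for each block length `n`. -/
def Kraft (L : (n : ℕ) → (Fin n → 𝒳) → ℕ) : Prop :=
  ∀ n : ℕ, ∑ w : Fin n → 𝒳, (2 : ℝ) ^ (-(L n w : ℝ)) ≤ 1

/-- i.i.d. (memoryless) probability of a word. -/
noncomputable def wp (p : 𝒳 → ℝ) {n : ℕ} (w : Fin n → 𝒳) : ℝ := ∏ i, p (w i)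

/-- Strong universality of the code `L`:
`R_L^n = sup_μ max_w (L(w) + log₂ μ(w)) = o(n)`, the sup over memoryless sources. -/
def StronglyUniversal (L : (n : ℕ) → (Fin n → 𝒳) → ℕ) : Prop :=
  ∃ R : ℕ → ℝ, Tendsto (fun n => R n / n) atTop (𝓝 0) ∧
    ∀ (n : ℕ) (μ : 𝒳 → ℝ), IsPosPMF μ → ∀ w : Fin n → 𝒳,
      (L n w : ℝ) + Real.logb 2 (wp μ w) ≤ R n

/-- Kullback–Leibler divergence in bits between two pmfs on `𝒳`. -/
noncomputable def D (p q : 𝒳 → ℝ) : ℝ := ∑ a, p a * Real.logb 2 (p a / q a)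

/-- The word `x_{s+1}, …, x_{s+n}` of the sequence `x`. -/
def seg (x : ℕ → 𝒳) (s n : ℕ) : Fin n → 𝒳 := fun i => x (s + (i : ℕ))

/-- `P` is the joint law of a sequence of independent observations with `X_{i+1} ∼ ps i`
(characterized by its values on cylinder sets). -/
def IsProductLaw (ps : ℕ → 𝒳 → ℝ) (P : Measure (ℕ → 𝒳)) : Prop :=
  IsProbabilityMeasure P ∧
    ∀ (n : ℕ) (w : Fin n → 𝒳),
      P {x | ∀ i : Fin n, x (i : ℕ) = w i} = ∏ i : Fin n, ENNReal.ofReal (ps (i : ℕ) (w i))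

/-- `P` is the law of an i.i.d. sequence with marginal pmf `p`. -/
def IsIIDLaw (p : 𝒳 → ℝ) (P : Measure (ℕ → 𝒳)) : Prop := IsProductLaw (fun _ => p) P

/-- The one-sided test statistic `−L(x_{s+1}^{s+n}) − log₂ ν(x_{s+1}^{s+n}) − nλ`. -/
noncomputable def stat (L : (n : ℕ) → (Fin n → 𝒳) → ℕ) (ν : 𝒳 → ℝ) (lam : ℝ)
    (s : ℕ) (x : ℕ → 𝒳) (n : ℕ) : ℝ :=
  -(L n (seg x s n) : ℝ) - Real.logb 2 (wp ν (seg x s n)) - n * lam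

/-- The auxiliary stopping time
`N(α) = inf {n ≥ 1 : −L(x_{s+1}^{s+n}) − log₂ ν(x_{s+1}^{s+n}) − nλ ≥ −log₂ α}`
(`⊤` if the set is empty). -/
noncomputable def Naux (L : (n : ℕ) → (Fin n → 𝒳) → ℕ) (ν : 𝒳 → ℝ) (lam α : ℝ)
    (s : ℕ) (x : ℕ → 𝒳) : ℕ∞ :=
  sInf {m : ℕ∞ | ∃ n : ℕ, m = n ∧ 1 ≤ n ∧ -Real.logb 2 α ≤ stat L ν lam s x n}

/-- The CUSUM statistic `−L(x_{s+k+1}^{s+n}) − log₂ ν(x_{s+k+1}^{s+n}) − nλ`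
(here `0 ≤ k < n`, corresponding to the 1-indexed segment `x_{k+1}^{n}` after `s`
training samples). -/
noncomputable def cstat (L : (n : ℕ) → (Fin n → 𝒳) → ℕ) (ν : 𝒳 → ℝ) (lam : ℝ)
    (s : ℕ) (x : ℕ → 𝒳) (k n : ℕ) : ℝ :=
  -(L (n - k) (seg x (s + k) (n - k)) : ℝ)
    - Real.logb 2 (wp ν (seg x (s + k) (n - k))) - n * lam

/-- The CUSUM stopping time
`M(γ) = inf {n ≥ 1 : max_{1 ≤ k ≤ n} (−L(x_k^n) − log₂ ν(x_k^n) − nλ) ≥ log₂ γ}`. -/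
noncomputable def Mstop (L : (n : ℕ) → (Fin n → 𝒳) → ℕ) (ν : 𝒳 → ℝ) (lam γ : ℝ)
    (s : ℕ) (x : ℕ → 𝒳) : ℕ∞ :=
  sInf {m : ℕ∞ | ∃ n : ℕ, m = n ∧ 1 ≤ n ∧ ∃ k < n, Real.logb 2 γ ≤ cstat L ν lam s x k n}

/-- Expectation of an (extended) stopping time. -/
noncomputable def lexp (P : Measure (ℕ → 𝒳)) (N : (ℕ → 𝒳) → ℕ∞) : ℝ≥0∞ :=
  ∫⁻ x, (N x : ℝ≥0∞) ∂P

/-- The σ-algebra generated by the first `m` coordinates. -/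
def firstCoords (𝒳 : Type) [MeasurableSpace 𝒳] (m : ℕ) : MeasurableSpace (ℕ → 𝒳) :=
  MeasurableSpace.comap (fun x => (fun i : Fin m => x (i : ℕ))) inferInstance

/-- An (extended) stopping variable of the observation sequence. -/
def IsSeqStoppingTime (N : (ℕ → 𝒳) → ℕ∞) : Prop :=
  ∀ n : ℕ, MeasurableSet[firstCoords 𝒳 n] {x | N x ≤ (n : ℕ∞)}

/-- Lorden's worst-case expected delay
`Ē₁(N) = sup_{m ≥ 1} ess sup E_m[(N − m + 1)⁺ | X_1, …, X_{m−1}]`,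
where under `P_m` the first `m − 1` observations are i.i.d. with the pre-change law
(the full i.i.d. pre-change law is `P0`) and the observations from time `m` on are
i.i.d. with the post-change law (full i.i.d. law `P1`).  The conditional expectation
given `X_1, …, X_{m−1}` is realized by integrating out the coordinates from `m` on. -/
noncomputable def lordenE1 (P0 P1 : Measure (ℕ → 𝒳)) (N : (ℕ → 𝒳) → ℕ∞) : ℝ≥0∞ :=
  ⨆ m : ℕ, essSup
    (fun x => ∫⁻ y, ((N (fun i => if i < m then x i else y i) : ℝ≥0∞) - m) ∂P1) P0

/-- Empirical distribution of the first `n0` samples of the sequence `x`. -/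
noncomputable def emp (n0 : ℕ) (x : ℕ → 𝒳) (a : 𝒳) : ℝ :=
  ((Finset.range n0).filter (fun i => x i = a)).card / n0

/-- The optimal worst-case delay over all stopping times with `E₀(S) ≥ γ`
(Lorden's class `S_γ`). -/
noncomputable def minDelay (P0 P1 : Measure (ℕ → 𝒳)) (γ : ℝ) : ℝ≥0∞ :=
  sInf {r : ℝ≥0∞ | ∃ N : (ℕ → 𝒳) → ℕ∞, IsSeqStoppingTime N ∧
    ENNReal.ofReal γ ≤ lexp P0 N ∧ r = lordenE1 P0 P1 N}



set_option linter.unusedSectionVars false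

private lemma sum_split (k m : ℕ) (f : 𝒳 → ℝ) (G : (Fin m → 𝒳) → ℝ) :
    ∑ u : Fin (k + m) → 𝒳, (∏ i, f (u i)) * G (fun i => u (Fin.natAdd k i)) =
      (∑ v : Fin k → 𝒳, ∏ i, f (v i)) * (∑ w : Fin m → 𝒳, (∏ i, f (w i)) * G w) := by
  classical
  set e : ((Fin k → 𝒳) × (Fin m → 𝒳)) ≃ (Fin (k + m) → 𝒳) :=
    (Equiv.sumArrowEquivProdArrow (Fin k) (Fin m) 𝒳).symm.trans
      (Equiv.arrowCongr finSumFinEquiv (Equiv.refl 𝒳)) with he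
  have heval : ∀ (v : Fin k → 𝒳) (w : Fin m → 𝒳) (j : Fin k ⊕ Fin m),
      e (v, w) (finSumFinEquiv j) = Sum.elim v w j := by
    intro v w j
    simp [he, Equiv.arrowCongr, Equiv.sumArrowEquivProdArrow]
  rw [← Equiv.sum_comp e (fun u : Fin (k+m) → 𝒳 => (∏ i, f (u i)) * G (fun i => u (Fin.natAdd k i)))]
  rw [Fintype.sum_prod_type]
  rw [Finset.sum_mul_sum]
  refine Finset.sum_congr rfl fun v _ => Finset.sum_congr rfl fun w _ => ?_
  have h1 : (∏ i, f (e (v, w) i)) = (∏ i, f (v i)) * ∏ i, f (w i) := by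
    rw [← Equiv.prod_comp finSumFinEquiv (fun i => f (e (v, w) i))]
    rw [Fintype.prod_sum_type]
    congr 1
    · exact Finset.prod_congr rfl fun i _ => by rw [heval]; rfl
    · exact Finset.prod_congr rfl fun i _ => by rw [heval]; rfl
  have h2 : (fun i => e (v, w) (Fin.natAdd k i)) = w := by
    funext i
    have : Fin.natAdd k i = finSumFinEquiv (Sum.inr i) := rfl
    rw [this, heval]; rfl
  rw [h1, h2]; ring

private lemma sum_split' (k m n : ℕ) (hn : n = k + m) (f : 𝒳 → ℝ) (G : (Fin m → 𝒳) → ℝ) :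
    ∑ u : Fin n → 𝒳, (∏ i, f (u i)) * G (fun i => u ⟨k + (i : ℕ), by omega⟩) =
      (∑ v : Fin k → 𝒳, ∏ i, f (v i)) * (∑ w : Fin m → 𝒳, (∏ i, f (w i)) * G w) := by
  subst hn
  rw [← sum_split k m f G]
  refine Finset.sum_congr rfl fun u _ => ?_
  congr 1

-- positivity of word probability
private lemma wp_pos {μ0 : 𝒳 → ℝ} (hμ0 : IsPosPMF μ0) {n : ℕ} (w : Fin n → 𝒳) :
    0 < wp μ0 w :=
  Finset.prod_pos fun i _ => hμ0.1 (w i)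

private lemma sum_wp_one {μ0 : 𝒳 → ℝ} (hμ0 : IsPosPMF μ0) (k : ℕ) :
    ∑ v : Fin k → 𝒳, wp μ0 v = 1 := by
  classical
  have := (Fintype.prod_sum (fun (_ : Fin k) (a : 𝒳) => μ0 a)).symm
  simp only [wp]
  rw [this, hμ0.2, Finset.prod_const_one]

/-- bound on the probability of a single CUSUM event under the iid law -/
private lemma event_bound (μ0 : 𝒳 → ℝ) (hμ0 : IsPosPMF μ0)
    (L : (n : ℕ) → (Fin n → 𝒳) → ℕ) (hL : Kraft L)
    (γ lam : ℝ) (hγ : 1 < γ) (hlam : 0 < lam)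
    (P : Measure (ℕ → 𝒳)) (hP : IsIIDLaw μ0 P) (k n : ℕ) (hk : k < n) :
    P {x | Real.logb 2 γ ≤ cstat L μ0 lam 0 x k n}
      ≤ ENNReal.ofReal (γ⁻¹ * (2:ℝ) ^ (-(n:ℝ) * lam)) := by
  classical
  set m := n - k with hm
  have hn : n = k + m := by omega
  set B : ℝ := γ⁻¹ * (2:ℝ) ^ (-(n:ℝ) * lam) with hB
  have hγ0 : (0:ℝ) < γ := lt_trans one_pos hγ
  have hBpos : 0 < B := by positivity
  -- the suffix predicate
  set ψ : (Fin m → 𝒳) → Prop :=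
    fun w => Real.logb 2 γ ≤ -(L m w : ℝ) - Real.logb 2 (wp μ0 w) - (n:ℝ) * lam with hψ
  -- pointwise bound on suffix probabilities
  have hkey : ∀ w : Fin m → 𝒳, ψ w → wp μ0 w ≤ B * (2:ℝ) ^ (-(L m w : ℝ)) := by
    intro w hw
    have hwp : 0 < wp μ0 w := wp_pos hμ0 w
    have h1 : Real.logb 2 (wp μ0 w) ≤ -(L m w : ℝ) - (n:ℝ) * lam - Real.logb 2 γ := by
      simp only [hψ] at hw; linarith
    have h2 : wp μ0 w = (2:ℝ) ^ (Real.logb 2 (wp μ0 w)) :=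
      (Real.rpow_logb two_pos (by norm_num) hwp).symm
    rw [h2]
    have h3 : (2:ℝ) ^ (Real.logb 2 (wp μ0 w)) ≤
        (2:ℝ) ^ (-(L m w : ℝ) - (n:ℝ) * lam - Real.logb 2 γ) :=
      Real.rpow_le_rpow_of_exponent_le one_le_two h1
    refine h3.trans_eq ?_
    rw [show -(L m w : ℝ) - (n:ℝ) * lam - Real.logb 2 γ
        = (-(n:ℝ) * lam) + (-(Real.logb 2 γ)) + (-(L m w : ℝ)) by ring]
    rw [Real.rpow_add two_pos, Real.rpow_add two_pos, Real.rpow_neg (by norm_num : (0:ℝ) ≤ 2),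
      Real.rpow_logb two_pos (by norm_num) hγ0]
    ring

  -- the event depends only on the first n coordinates
  have hsub : {x : ℕ → 𝒳 | Real.logb 2 γ ≤ cstat L μ0 lam 0 x k n} ⊆
      ⋃ u ∈ Finset.univ.filter (fun u : Fin n → 𝒳 => ψ (fun i => u ⟨k + (i:ℕ), by omega⟩)),
        {x : ℕ → 𝒳 | ∀ i : Fin n, x (i : ℕ) = u i} := by
    intro x hx
    refine Set.mem_iUnion₂.2 ⟨fun j : Fin n => x (j : ℕ), ?_, fun i => rfl⟩
    rw [Finset.mem_filter]
    refine ⟨Finset.mem_univ _, ?_⟩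
    simp only [cstat, seg, Set.mem_setOf_eq, Nat.zero_add, hψ] at hx ⊢
    convert hx using 3 <;> norm_num <;> rfl
  have hPs : P {x : ℕ → 𝒳 | Real.logb 2 γ ≤ cstat L μ0 lam 0 x k n} ≤
      ∑ u ∈ Finset.univ.filter (fun u : Fin n → 𝒳 => ψ (fun i => u ⟨k + (i:ℕ), by omega⟩)),
        P {x : ℕ → 𝒳 | ∀ i : Fin n, x (i : ℕ) = u i} :=
    (measure_mono hsub).trans (measure_biUnion_finset_le _ _)
  have hcyl : ∀ u : Fin n → 𝒳, P {x : ℕ → 𝒳 | ∀ i : Fin n, x (i : ℕ) = u i}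
      = ENNReal.ofReal (wp μ0 u) := by
    intro u
    rw [hP.2 n u, ← ENNReal.ofReal_prod_of_nonneg (fun i _ => (hμ0.1 (u i)).le)]
    rfl
  simp only [hcyl] at hPs
  rw [← ENNReal.ofReal_sum_of_nonneg (fun u _ => (wp_pos hμ0 u).le)] at hPs
  refine hPs.trans (ENNReal.ofReal_le_ofReal ?_)
  -- real inequality
  have hfil : ∑ u ∈ Finset.univ.filter
        (fun u : Fin n → 𝒳 => ψ (fun i => u ⟨k + (i:ℕ), by omega⟩)), wp μ0 u
      = ∑ u : Fin n → 𝒳, (∏ i, μ0 (u i)) *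
          (fun w => if ψ w then (1:ℝ) else 0) (fun i => u ⟨k + (i:ℕ), by omega⟩) := by
    rw [Finset.sum_filter]
    refine Finset.sum_congr rfl fun u _ => ?_
    by_cases h : ψ (fun i => u ⟨k + (i:ℕ), by omega⟩) <;> simp [h, wp]
  rw [hfil, sum_split' k m n hn μ0 (fun w => if ψ w then (1:ℝ) else 0)]
  have h1 : ∑ v : Fin k → 𝒳, ∏ i, μ0 (v i) = 1 := sum_wp_one hμ0 k
  rw [h1, one_mul]
  have h2 : ∑ w : Fin m → 𝒳, (∏ i, μ0 (w i)) * (if ψ w then (1:ℝ) else 0)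
      ≤ ∑ w : Fin m → 𝒳, B * (2:ℝ) ^ (-(L m w : ℝ)) := by
    refine Finset.sum_le_sum fun w _ => ?_
    by_cases h : ψ w
    · simp only [h, if_true, mul_one]
      exact hkey w h
    · simp only [h, if_false, mul_zero]
      positivity
  refine h2.trans ?_
  rw [← Finset.mul_sum]
  calc B * ∑ w : Fin m → 𝒳, (2:ℝ) ^ (-(L m w : ℝ)) ≤ B * 1 :=
        mul_le_mul_of_nonneg_left (hL m) hBpos.le
    _ = B := mul_one B


private lemma one_le_Mstop (L : (n : ℕ) → (Fin n → 𝒳) → ℕ) (ν : 𝒳 → ℝ) (lam γ : ℝ)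
    (x : ℕ → 𝒳) : 1 ≤ Mstop L ν lam γ 0 x := by
  refine le_sInf fun b hb => ?_
  obtain ⟨n, rfl, hn1, -⟩ := hb
  exact_mod_cast Nat.one_le_cast.2 hn1

private lemma Mstop_jump (L : (n : ℕ) → (Fin n → 𝒳) → ℕ) (ν : 𝒳 → ℝ) (lam γ : ℝ)
    {x : ℕ → 𝒳} {n : ℕ} (h1 : Mstop L ν lam γ 0 x ≤ ((n+1 : ℕ) : ℕ∞))
    (h2 : ¬ Mstop L ν lam γ 0 x ≤ ((n : ℕ) : ℕ∞)) :
    ∃ k < n + 1, Real.logb 2 γ ≤ cstat L ν lam 0 x k (n + 1) := by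
  classical
  set S : Set ℕ∞ := {m : ℕ∞ | ∃ nn : ℕ, m = nn ∧ 1 ≤ nn ∧
      ∃ k < nn, Real.logb 2 γ ≤ cstat L ν lam 0 x k nn} with hS
  have hsInf : Mstop L ν lam γ 0 x = sInf S := rfl
  have hex : ∃ b ∈ S, b ≤ ((n+1:ℕ) : ℕ∞) := by
    by_contra hcon
    push_neg at hcon
    have hge : ((n+2:ℕ) : ℕ∞) ≤ sInf S := by
      refine le_sInf fun b hb => ?_
      obtain ⟨nb, rfl, hnb1, hev⟩ := hb
      have hlt : ((n+1:ℕ) : ℕ∞) < (nb : ℕ∞) := hcon _ ⟨nb, rfl, hnb1, hev⟩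
      have h' : n + 1 < nb := by exact_mod_cast hlt
      exact_mod_cast Nat.cast_le.2 (by omega : n + 2 ≤ nb)
    have hle2 := le_trans hge (hsInf ▸ h1)
    have : n + 2 ≤ n + 1 := by exact_mod_cast hle2
    omega
  obtain ⟨b, hbS, hble⟩ := hex
  have hbS' := hbS
  obtain ⟨nb, rfl, hnb1, k, hk, hkev⟩ := hbS'
  have hnb_le : nb ≤ n + 1 := by exact_mod_cast hble
  have hnb_gt : ¬ (nb ≤ n) := by
    intro hle
    exact h2 (le_trans (hsInf ▸ sInf_le hbS) (Nat.cast_le.2 hle))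
  have : nb = n + 1 := by omega
  subst this
  exact ⟨k, hk, hkev⟩


private lemma amgm_ennreal (c a : ℝ≥0∞) (hc : c ≠ ⊤) : 2 * c ≤ a + c * c * a⁻¹ := by
  rcases eq_or_ne a 0 with rfl | ha0
  · rcases eq_or_ne c 0 with rfl | hc0
    · simp
    · have : c * c * (0:ℝ≥0∞)⁻¹ = ⊤ := by
        rw [ENNReal.inv_zero, ENNReal.mul_top (mul_ne_zero hc0 hc0)]
      rw [this]
      simp
  · rcases eq_or_ne a ⊤ with rfl | hat
    · simp
    · have hinv : a⁻¹ ≠ ⊤ := ENNReal.inv_ne_top.2 ha0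
      have hL : (2 : ℝ≥0∞) * c ≠ ⊤ := ENNReal.mul_ne_top (by norm_num) hc
      have hR : a + c * c * a⁻¹ ≠ ⊤ :=
        ENNReal.add_ne_top.2 ⟨hat, ENNReal.mul_ne_top (ENNReal.mul_ne_top hc hc) hinv⟩
      rw [← ENNReal.toReal_le_toReal hL hR, ENNReal.toReal_mul, ENNReal.toReal_add hat
        (ENNReal.mul_ne_top (ENNReal.mul_ne_top hc hc) hinv), ENNReal.toReal_mul,
        ENNReal.toReal_mul, ENNReal.toReal_inv]
      set x := a.toReal
      set cr := c.toReal
      have hx : 0 < x := ENNReal.toReal_pos ha0 hat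
      have hcr : 0 ≤ cr := ENNReal.toReal_nonneg
      have h2 : (2:ℝ≥0∞).toReal = 2 := by norm_num
      rw [h2]
      have hkey : 0 ≤ (x - cr)^2 * x⁻¹ := mul_nonneg (sq_nonneg _) (inv_nonneg.2 hx.le)
      have hc1 : x * x⁻¹ = 1 := mul_inv_cancel₀ hx.ne'
      nlinarith [hkey, hc1, sq_nonneg (x - cr)]

/-- mean time to false alarm of the JB–Page CUSUM test:
`E₀(M0(γ)) ≥ γ (2^λ − 1)`. -/
theorem stmt1 {𝒳 : Type} [Fintype 𝒳] [Nonempty 𝒳] [MeasurableSpace 𝒳]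
    (μ0 : 𝒳 → ℝ) (hμ0 : IsPosPMF μ0)
    (L : (n : ℕ) → (Fin n → 𝒳) → ℕ) (hL : Kraft L)
    (γ lam : ℝ) (hγ : 1 < γ) (hlam : 0 < lam)
    (P : Measure (ℕ → 𝒳)) (hP : IsIIDLaw μ0 P) :
    ENNReal.ofReal (γ * ((2 : ℝ) ^ lam - 1)) ≤ lexp P (Mstop L μ0 lam γ 0) := by
  classical
  haveI : IsProbabilityMeasure P := hP.1
  have hγ0 : (0:ℝ) < γ := lt_trans one_pos hγ
  set t : ℝ := (2:ℝ) ^ (-lam) with ht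
  have ht0 : 0 < t := Real.rpow_pos_of_pos two_pos _
  have ht1 : t < 1 := Real.rpow_lt_one_of_one_lt_of_neg one_lt_two (neg_neg_iff_pos.2 hlam)
  set M : (ℕ → 𝒳) → ℕ∞ := Mstop L μ0 lam γ 0 with hMdef
  set A : ℕ → Set (ℕ → 𝒳) := fun n => {x | M x ≤ (n : ℕ∞)} with hA
  set C : ℕ → Set (ℕ → 𝒳) := fun n => toMeasurable P (A n) with hC
  set Dn : ℕ → Set (ℕ → 𝒳) := fun n => ⋂ j, C (n + j) with hD
  have hAmono : ∀ {a b : ℕ}, a ≤ b → A a ⊆ A b := by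
    intro a b hab x hx
    have hx' : M x ≤ (a : ℕ∞) := hx
    exact le_trans hx' (Nat.cast_le.2 hab)
  have hDmeas : ∀ n, MeasurableSet (Dn n) :=
    fun n => MeasurableSet.iInter fun j => measurableSet_toMeasurable _ _
  have hAD : ∀ n, A n ⊆ Dn n := by
    intro n x hx
    exact Set.mem_iInter.2 fun j => subset_toMeasurable P _ (hAmono (Nat.le_add_right n j) hx)
  have hDC : ∀ n, Dn n ⊆ C n := by
    intro n x hx
    simpa using Set.mem_iInter.1 hx 0
  have hDmono : ∀ n, Dn n ⊆ Dn (n+1) := by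
    intro n x hx
    refine Set.mem_iInter.2 fun j => ?_
    have h1 := Set.mem_iInter.1 hx (j+1)
    have he : n + (j+1) = n + 1 + j := by omega
    rwa [he] at h1
  have hDle : ∀ {a b : ℕ}, a ≤ b → Dn a ⊆ Dn b := by
    intro a b hab
    induction hab with
    | refl => exact subset_rfl
    | @step m h ih => exact ih.trans (hDmono m)
  have hPDA : ∀ n, P (Dn n) ≤ P (A n) :=
    fun n => le_trans (measure_mono (hDC n)) (le_of_eq (measure_toMeasurable _))
  have hPAD : ∀ n, P (A n) ≤ P (Dn n) := fun n => measure_mono (hAD n)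
  have hA0 : A 0 = ∅ := by
    ext x
    simp only [hA, Set.mem_setOf_eq, Set.mem_empty_iff_false, iff_false]
    intro hx
    have h1 := one_le_Mstop L μ0 lam γ x
    have : (1 : ℕ∞) ≤ ((0:ℕ) : ℕ∞) := le_trans h1 hx
    simp at this
  have hPD0 : P (Dn 0) = 0 := by
    refine le_antisymm ?_ zero_le
    calc P (Dn 0) ≤ P (A 0) := hPDA 0
      _ = 0 := by rw [hA0, measure_empty]
  -- the measurable minorant of M
  set N : (ℕ → 𝒳) → ℝ≥0∞ :=
    fun x => 1 + ∑' j : ℕ, ((Dn (j+1))ᶜ).indicator (fun _ => (1:ℝ≥0∞)) x with hN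
  have hNmeas : Measurable N := by
    refine Measurable.add measurable_const (Measurable.ennreal_tsum fun j => ?_)
    exact measurable_const.indicator (hDmeas (j+1)).compl
  -- value of N when the least index is known
  have hNval : ∀ (x : ℕ → 𝒳) (n : ℕ), x ∈ Dn (n+1) → x ∉ Dn n →
      N x = ((n+1 : ℕ) : ℝ≥0∞) := by
    intro x n hin hout
    have hout' : ∀ j, j ≤ n → x ∉ Dn j := fun j hj hxj => hout (hDle hj hxj)
    have hin' : ∀ j, n+1 ≤ j → x ∈ Dn j := fun j hj => hDle hj hin
    have htsum : ∑' j : ℕ, ((Dn (j+1))ᶜ).indicator (fun _ => (1:ℝ≥0∞)) x = (n : ℝ≥0∞) := by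
      rw [tsum_eq_sum (s := Finset.range n) (fun j hj => ?_)]
      · rw [Finset.sum_congr rfl (fun j hj => ?_), Finset.sum_const, Finset.card_range,
          nsmul_eq_mul, mul_one]
        rw [Set.indicator_of_mem]
        exact Set.mem_compl (hout' (j+1) (Finset.mem_range.1 hj))
      · rw [Set.indicator_of_notMem]
        simp only [Set.mem_compl_iff, not_not]
        have hnj : n ≤ j := by simpa using hj
        exact hin' (j+1) (by omega)
    rw [hN]
    simp only
    rw [htsum]
    push_cast
    ring
  -- N is below M
  have hNleM : ∀ x, N x ≤ ((M x : ℕ∞) : ℝ≥0∞) := by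
    intro x
    by_cases hMx : M x = ⊤
    · rw [hMx, ENat.toENNReal_top]
      exact le_top
    · obtain ⟨mn, hmn⟩ := WithTop.ne_top_iff_exists.1 hMx
      have h1mn : 1 ≤ mn := by
        have h1 := one_le_Mstop L μ0 lam γ x
        rw [hMdef] at hmn
        rw [← hmn] at h1
        exact Nat.one_le_cast.1 h1
      have hxA : x ∈ A mn := by
        have : M x ≤ (mn : ℕ∞) := le_of_eq hmn.symm
        exact this
      have hxD : ∀ j, mn ≤ j → x ∈ Dn j := fun j hj => hDle hj (hAD mn hxA)
      have htsum : ∑' j : ℕ, ((Dn (j+1))ᶜ).indicator (fun _ => (1:ℝ≥0∞)) x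
          ≤ ((mn - 1 : ℕ) : ℝ≥0∞) := by
        rw [tsum_eq_sum (s := Finset.range (mn - 1)) (fun j hj => ?_)]
        · calc ∑ j ∈ Finset.range (mn-1), ((Dn (j+1))ᶜ).indicator (fun _ => (1:ℝ≥0∞)) x
              ≤ ∑ _j ∈ Finset.range (mn-1), (1:ℝ≥0∞) :=
                Finset.sum_le_sum fun j _ => Set.indicator_apply_le fun _ => le_rfl
            _ = ((mn - 1 : ℕ) : ℝ≥0∞) := by
                rw [Finset.sum_const, Finset.card_range, nsmul_eq_mul, mul_one]
        · rw [Set.indicator_of_notMem]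
          simp only [Set.mem_compl_iff, not_not]
          have hnj : mn - 1 ≤ j := by simpa using hj
          exact hxD (j+1) (by omega)
      have hle : N x ≤ ((mn:ℕ) : ℝ≥0∞) := by
        rw [hN]
        simp only
        calc 1 + ∑' j : ℕ, ((Dn (j+1))ᶜ).indicator (fun _ => (1:ℝ≥0∞)) x
            ≤ 1 + ((mn - 1 : ℕ) : ℝ≥0∞) := add_le_add_right htsum 1
          _ = ((mn : ℕ) : ℝ≥0∞) := by
              conv_rhs => rw [show mn = 1 + (mn - 1) by omega]
              push_cast
              simp
      rw [← hmn]
      exact_mod_cast hle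
  -- the comparison function g
  set F : ℕ → Set (ℕ → 𝒳) := fun n => Dn (n+1) \ Dn n with hF
  set g : (ℕ → 𝒳) → ℝ≥0∞ := fun x =>
    (Dn 0).indicator (fun _ => (⊤:ℝ≥0∞)) x +
      ∑' n : ℕ, (((n+1:ℕ) : ℝ≥0∞))⁻¹ * (F n).indicator (fun _ => (1:ℝ≥0∞)) x with hg
  -- N⁻¹ is below g
  have hinvg : ∀ x, (N x)⁻¹ ≤ g x := by
    intro x
    by_cases hx0 : x ∈ Dn 0
    · have : g x = ⊤ := by
        rw [hg]
        simp only
        simp [Set.indicator_of_mem hx0]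
      rw [this]
      exact le_top
    by_cases hx : ∃ j, x ∈ Dn j
    · set n := Nat.find hx with hn
      have hmem : x ∈ Dn n := Nat.find_spec hx
      have hn0 : n ≠ 0 := fun h => hx0 (h ▸ hmem)
      have hnmin : x ∉ Dn (n-1) := Nat.find_min hx (by omega)
      have hmem' : x ∈ Dn ((n-1)+1) := by rwa [show n-1+1 = n by omega]
      have hNx : N x = ((n : ℕ) : ℝ≥0∞) := by
        have := hNval x (n-1) hmem' hnmin
        rwa [show n-1+1 = n by omega] at this
      rw [hNx]
      have hterm : (((n-1)+1:ℕ) : ℝ≥0∞)⁻¹ * (F (n-1)).indicator (fun _ => (1:ℝ≥0∞)) x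
          = ((n : ℕ) : ℝ≥0∞)⁻¹ := by
        have hxF : x ∈ F (n-1) := by exact ⟨hmem', hnmin⟩
        rw [Set.indicator_of_mem hxF, mul_one, show n-1+1 = n by omega]
      calc ((n : ℕ) : ℝ≥0∞)⁻¹
          = (((n-1)+1:ℕ) : ℝ≥0∞)⁻¹ * (F (n-1)).indicator (fun _ => (1:ℝ≥0∞)) x := hterm.symm
        _ ≤ ∑' m : ℕ, (((m+1:ℕ) : ℝ≥0∞))⁻¹ * (F m).indicator (fun _ => (1:ℝ≥0∞)) x :=
            ENNReal.le_tsum (n-1)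
        _ ≤ g x := le_add_self
    · push_neg at hx
      have hNx : N x = ⊤ := by
        rw [hN]
        simp only
        have : ∑' j : ℕ, ((Dn (j+1))ᶜ).indicator (fun _ => (1:ℝ≥0∞)) x = ⊤ := by
          have heq : ∀ j : ℕ, ((Dn (j+1))ᶜ).indicator (fun _ => (1:ℝ≥0∞)) x = 1 :=
            fun j => Set.indicator_of_mem (Set.mem_compl (hx (j+1))) _
          rw [tsum_congr heq]
          exact ENNReal.tsum_const_eq_top_of_ne_zero one_ne_zero
        rw [this, add_top]
      rw [hNx, ENNReal.inv_top]
      exact zero_le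
  -- probability of each jump set
  have hPF : ∀ n : ℕ, P (F n) ≤ ((n+1:ℕ) : ℝ≥0∞) * ENNReal.ofReal (γ⁻¹ * t^(n+1)) := by
    intro n
    have h1 : P (F n) = P (Dn (n+1)) - P (Dn n) :=
      measure_diff (hDmono n) (hDmeas n).nullMeasurableSet (measure_ne_top P _)
    have h2 : P (Dn (n+1)) - P (Dn n) ≤ P (A (n+1)) - P (A n) :=
      tsub_le_tsub (hPDA (n+1)) (hPAD n)
    have h3 : P (A (n+1)) - P (A n) ≤ P (A (n+1) \ A n) := by
      rw [tsub_le_iff_right]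
      exact le_trans (measure_mono (Set.subset_diff_union _ _)) (measure_union_le _ _)
    have hsub : A (n+1) \ A n ⊆
        ⋃ k ∈ Finset.range (n+1), {x : ℕ → 𝒳 | Real.logb 2 γ ≤ cstat L μ0 lam 0 x k (n+1)} := by
      rintro x ⟨hx1, hx2⟩
      obtain ⟨k, hk, hev⟩ := Mstop_jump L μ0 lam γ hx1 hx2
      exact Set.mem_iUnion₂.2 ⟨k, Finset.mem_range.2 hk, hev⟩
    have h4 : P (A (n+1) \ A n) ≤
        ∑ k ∈ Finset.range (n+1), P {x : ℕ → 𝒳 | Real.logb 2 γ ≤ cstat L μ0 lam 0 x k (n+1)} :=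
      le_trans (measure_mono hsub) (measure_biUnion_finset_le _ _)
    have hexp : ∀ k ∈ Finset.range (n+1),
        P {x : ℕ → 𝒳 | Real.logb 2 γ ≤ cstat L μ0 lam 0 x k (n+1)}
          ≤ ENNReal.ofReal (γ⁻¹ * t^(n+1)) := by
      intro k hk
      have hb := event_bound μ0 hμ0 L hL γ lam hγ hlam P hP k (n+1) (Finset.mem_range.1 hk)
      have heq : γ⁻¹ * (2:ℝ) ^ (-((n+1:ℕ):ℝ) * lam) = γ⁻¹ * t^(n+1) := by
        congr 1
        rw [ht, ← Real.rpow_natCast ((2:ℝ)^(-lam)) (n+1), ← Real.rpow_mul (by norm_num)]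
        congr 1
        push_cast
        ring
      rwa [heq] at hb
    have h5 : ∑ k ∈ Finset.range (n+1),
        P {x : ℕ → 𝒳 | Real.logb 2 γ ≤ cstat L μ0 lam 0 x k (n+1)}
          ≤ ((n+1:ℕ) : ℝ≥0∞) * ENNReal.ofReal (γ⁻¹ * t^(n+1)) := by
      calc _ ≤ ∑ _k ∈ Finset.range (n+1), ENNReal.ofReal (γ⁻¹ * t^(n+1)) :=
            Finset.sum_le_sum hexp
        _ = ((n+1:ℕ) : ℝ≥0∞) * ENNReal.ofReal (γ⁻¹ * t^(n+1)) := by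
            rw [Finset.sum_const, Finset.card_range, nsmul_eq_mul]
    exact h1 ▸ le_trans h2 (le_trans h3 (le_trans h4 h5))
  -- integral of g
  have hgmeas2 : ∀ n : ℕ, Measurable fun x =>
      (((n+1:ℕ) : ℝ≥0∞))⁻¹ * (F n).indicator (fun _ => (1:ℝ≥0∞)) x := by
    intro n
    exact (measurable_const.indicator ((hDmeas (n+1)).diff (hDmeas n))).const_mul _
  have hgint : ∫⁻ x, g x ∂P ≤
      ENNReal.ofReal γ⁻¹ * (ENNReal.ofReal t * (1 - ENNReal.ofReal t)⁻¹) := by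
    rw [hg]
    simp only
    rw [lintegral_add_left (measurable_const.indicator (hDmeas 0))]
    have hI1 : ∫⁻ x, (Dn 0).indicator (fun _ => (⊤:ℝ≥0∞)) x ∂P = 0 := by
      rw [lintegral_indicator_const (hDmeas 0), hPD0, mul_zero]
    rw [hI1, zero_add]
    rw [lintegral_tsum (fun n => (hgmeas2 n).aemeasurable)]
    have hI2 : ∀ n : ℕ, ∫⁻ x, (((n+1:ℕ) : ℝ≥0∞))⁻¹ * (F n).indicator (fun _ => (1:ℝ≥0∞)) x ∂P
        ≤ ENNReal.ofReal (γ⁻¹ * t^(n+1)) := by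
      intro n
      rw [lintegral_const_mul _ (measurable_const.indicator ((hDmeas (n+1)).diff (hDmeas n))),
        lintegral_indicator_const ((hDmeas (n+1)).diff (hDmeas n)), one_mul]
      calc (((n+1:ℕ) : ℝ≥0∞))⁻¹ * P (F n)
          ≤ (((n+1:ℕ) : ℝ≥0∞))⁻¹ * (((n+1:ℕ) : ℝ≥0∞) * ENNReal.ofReal (γ⁻¹ * t^(n+1))) :=
            mul_le_mul_right (hPF n) _
        _ = ENNReal.ofReal (γ⁻¹ * t^(n+1)) := by
            rw [← mul_assoc, ENNReal.inv_mul_cancel (by exact_mod_cast Nat.succ_ne_zero n)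
              (ENNReal.natCast_ne_top _), one_mul]
    calc ∑' n : ℕ, ∫⁻ x, (((n+1:ℕ) : ℝ≥0∞))⁻¹ * (F n).indicator (fun _ => (1:ℝ≥0∞)) x ∂P
        ≤ ∑' n : ℕ, ENNReal.ofReal (γ⁻¹ * t^(n+1)) := ENNReal.tsum_le_tsum hI2
      _ = ENNReal.ofReal γ⁻¹ * (ENNReal.ofReal t * (1 - ENNReal.ofReal t)⁻¹) := by
          have hterm : ∀ n : ℕ, ENNReal.ofReal (γ⁻¹ * t^(n+1))
              = ENNReal.ofReal γ⁻¹ * ((ENNReal.ofReal t)^n * ENNReal.ofReal t) := by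
            intro n
            rw [ENNReal.ofReal_mul (by positivity), ENNReal.ofReal_pow ht0.le, pow_succ]
          rw [tsum_congr hterm, ENNReal.tsum_mul_left, ENNReal.tsum_mul_right,
            ENNReal.tsum_geometric, mul_comm ((1 - ENNReal.ofReal t)⁻¹) (ENNReal.ofReal t)]
  -- the key constant
  set Cc : ℝ≥0∞ := ENNReal.ofReal (γ * ((2 : ℝ) ^ lam - 1)) with hCc
  have h2lam : (1:ℝ) < (2:ℝ) ^ lam := Real.one_lt_rpow_iff_of_pos two_pos |>.2 (Or.inl ⟨one_lt_two, hlam⟩)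
  have hCpos : (0:ℝ) < γ * ((2 : ℝ) ^ lam - 1) := by nlinarith
  have hCne : Cc ≠ ⊤ := ENNReal.ofReal_ne_top
  -- Cc * ∫ g ≤ 1
  have htt : (2:ℝ) ^ lam * t = 1 := by
    rw [ht, ← Real.rpow_add two_pos]
    simp
  have hkey1 : Cc * (ENNReal.ofReal γ⁻¹ * (ENNReal.ofReal t * (1 - ENNReal.ofReal t)⁻¹)) ≤ 1 := by
    have e1 : Cc * ENNReal.ofReal γ⁻¹ = ENNReal.ofReal ((2 : ℝ) ^ lam - 1) := by
      rw [hCc, ← ENNReal.ofReal_mul hCpos.le]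
      congr 1
      field_simp
    have e2 : ENNReal.ofReal ((2 : ℝ) ^ lam - 1) * ENNReal.ofReal t = ENNReal.ofReal (1 - t) := by
      rw [← ENNReal.ofReal_mul (by linarith)]
      congr 1
      rw [sub_mul, htt, one_mul]
    have e3 : (1 : ℝ≥0∞) - ENNReal.ofReal t = ENNReal.ofReal (1 - t) := by
      rw [← ENNReal.ofReal_one, ← ENNReal.ofReal_sub _ ht0.le]
    calc Cc * (ENNReal.ofReal γ⁻¹ * (ENNReal.ofReal t * (1 - ENNReal.ofReal t)⁻¹))
        = (Cc * ENNReal.ofReal γ⁻¹ * ENNReal.ofReal t) * (1 - ENNReal.ofReal t)⁻¹ := by ring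
      _ = ENNReal.ofReal (1 - t) * (ENNReal.ofReal (1 - t))⁻¹ := by rw [e1, e2, e3]
      _ = 1 := ENNReal.mul_inv_cancel (ENNReal.ofReal_pos.2 (by linarith)).ne' ENNReal.ofReal_ne_top
      _ ≤ 1 := le_rfl
  have hCJ : Cc * ∫⁻ x, (N x)⁻¹ ∂P ≤ 1 := by
    calc Cc * ∫⁻ x, (N x)⁻¹ ∂P ≤ Cc * ∫⁻ x, g x ∂P :=
          mul_le_mul_right (lintegral_mono hinvg) Cc
      _ ≤ Cc * (ENNReal.ofReal γ⁻¹ * (ENNReal.ofReal t * (1 - ENNReal.ofReal t)⁻¹)) :=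
          mul_le_mul_right hgint Cc
      _ ≤ 1 := hkey1
  -- AM-GM argument
  have hconst : ∫⁻ _x, 2 * Cc ∂P = 2 * Cc := by
    rw [lintegral_const, measure_univ, mul_one]
  have hAM : 2 * Cc ≤ (∫⁻ x, N x ∂P) + Cc * Cc * ∫⁻ x, (N x)⁻¹ ∂P := by
    calc 2 * Cc = ∫⁻ _x, 2 * Cc ∂P := hconst.symm
      _ ≤ ∫⁻ x, N x + Cc * Cc * (N x)⁻¹ ∂P :=
          lintegral_mono fun x => amgm_ennreal Cc (N x) hCne
      _ = (∫⁻ x, N x ∂P) + ∫⁻ x, Cc * Cc * (N x)⁻¹ ∂P :=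
          lintegral_add_left hNmeas _
      _ = (∫⁻ x, N x ∂P) + Cc * Cc * ∫⁻ x, (N x)⁻¹ ∂P := by
          rw [lintegral_const_mul (f := fun x => (N x)⁻¹) _ hNmeas.inv]
  have hfinal : Cc ≤ ∫⁻ x, N x ∂P := by
    have h1 : 2 * Cc ≤ (∫⁻ x, N x ∂P) + Cc := by
      refine hAM.trans (add_le_add_right ?_ _)
      calc Cc * Cc * ∫⁻ x, (N x)⁻¹ ∂P = Cc * (Cc * ∫⁻ x, (N x)⁻¹ ∂P) := by ring
        _ ≤ Cc * 1 := mul_le_mul_right hCJ Cc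
        _ = Cc := mul_one Cc
    rw [two_mul] at h1
    exact (ENNReal.add_le_add_iff_right hCne).1 h1
  refine hfinal.trans ?_
  exact lintegral_mono hNleM


end ChangeDetect
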